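/- For real p, q > 0 with p·q < 1, the function λ ↦ λ^(q+1) - (p+1)·λ^q + p has a unique zero λ(p,q) in the interval (0, 1), and this zero satisfies 0 < λ(p,q) < (p+1)q/(q+1) < 1. -/

import Mathlib

open Real Set

theorem stmt_4 (p q : ℝ) (hp : 0 < p) (hq : 0 < q) (hpq : p * q < 1) :
    (∃! l : ℝ, 0 < l ∧ l < 1 ∧ l ^ (q + 1) - (p + 1) * l ^ q + p = 0) ∧
    (∀ l : ℝ, 0 < l → l < 1 → l ^ (q + 1) - (p + 1) * l ^ q + p = 0 →
      0 < l ∧ l < (p + 1) * q / (q + 1) ∧ (p + 1) * q / (q + 1) < 1) := by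
  set f : ℝ → ℝ := fun l => l ^ (q + 1) - (p + 1) * l ^ q + p with hf
  set l₀ : ℝ := (p + 1) * q / (q + 1) with hl₀
  have hq1 : (0:ℝ) < q + 1 := by linarith
  have hl₀pos : 0 < l₀ := by
    apply div_pos (by nlinarith) hq1
  have hl₀lt1 : l₀ < 1 := by
    rw [hl₀, div_lt_one hq1]; nlinarith
  have hcont : Continuous f := by
    apply Continuous.add
    · exact (Real.continuous_rpow_const (by linarith)).sub
        (continuous_const.mul (Real.continuous_rpow_const hq.le))
    · exact continuous_const
  have hderiv : ∀ l : ℝ, 0 < l →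
      HasDerivAt f (l ^ (q - 1) * ((q + 1) * l - (p + 1) * q)) l := by
    intro l hl
    have h1 : HasDerivAt (fun x : ℝ => x ^ (q + 1)) ((q + 1) * l ^ (q + 1 - 1)) l :=
      Real.hasDerivAt_rpow_const (Or.inl hl.ne')
    have h2 : HasDerivAt (fun x : ℝ => x ^ q) (q * l ^ (q - 1)) l :=
      Real.hasDerivAt_rpow_const (Or.inl hl.ne')
    have h3 := (h1.sub (h2.const_mul (p + 1))).add_const p
    refine h3.congr_deriv ?_
    have e1 : q + 1 - 1 = q := by ring
    have e2 : l ^ q = l ^ (q - 1) * l := by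
      rw [← Real.rpow_add_one hl.ne' (q - 1)]; ring_nf
    rw [e1, e2]; ring
  have hanti : StrictAntiOn f (Icc 0 l₀) := by
    apply strictAntiOn_of_deriv_neg (convex_Icc _ _) hcont.continuousOn
    intro x hx
    rw [interior_Icc] at hx
    rw [(hderiv x hx.1).deriv]
    apply mul_neg_of_pos_of_neg (Real.rpow_pos_of_pos hx.1 _)
    have := hx.2
    rw [hl₀, lt_div_iff₀ hq1] at this
    nlinarith
  have hmono : StrictMonoOn f (Icc l₀ 1) := by
    apply strictMonoOn_of_deriv_pos (convex_Icc _ _) hcont.continuousOn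
    intro x hx
    rw [interior_Icc] at hx
    have hx0 : 0 < x := lt_trans hl₀pos hx.1
    rw [(hderiv x hx0).deriv]
    apply mul_pos (Real.rpow_pos_of_pos hx0 _)
    have := hx.1
    rw [hl₀, div_lt_iff₀ hq1] at this
    nlinarith
  have hf1 : f 1 = 0 := by simp [hf, Real.one_rpow]
  have hf0 : f 0 = p := by
    simp [hf, Real.zero_rpow (by linarith : q + 1 ≠ 0), Real.zero_rpow hq.ne']
  have hfl₀ : f l₀ < 0 := by
    have := hmono (left_mem_Icc.mpr hl₀lt1.le) (right_mem_Icc.mpr hl₀lt1.le) hl₀lt1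
    rwa [hf1] at this
  -- every zero in (0,1) is < l₀
  have hzlt : ∀ l : ℝ, 0 < l → l < 1 → f l = 0 → l < l₀ := by
    intro l hl0 hl1 hfl
    by_contra h
    push_neg at h
    rcases eq_or_lt_of_le h with h | h
    · rw [← h] at hfl; linarith
    · have : f l < f 1 := hmono ⟨h.le.trans (le_refl l) |>.trans (le_refl l), hl1.le⟩
        (right_mem_Icc.mpr hl₀lt1.le) hl1
      rw [hf1, hfl] at this; exact lt_irrefl 0 this
  -- existence
  have hex : ∃ c ∈ Ioo (0:ℝ) l₀, f c = 0 := by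
    have := intermediate_value_Ioo' hl₀pos.le hcont.continuousOn
    have h0 : (0:ℝ) ∈ Ioo (f l₀) (f 0) := by
      constructor
      · exact hfl₀
      · rw [hf0]; exact hp
    obtain ⟨c, hc, hfc⟩ := this h0
    exact ⟨c, hc, hfc⟩
  obtain ⟨c, hc, hfc⟩ := hex
  refine ⟨⟨c, ⟨hc.1, hc.2.trans hl₀lt1, hfc⟩, ?_⟩, ?_⟩
  · rintro y ⟨hy0, hy1, hfy⟩
    have hyl₀ : y < l₀ := hzlt y hy0 hy1 hfy
    exact hanti.injOn ⟨hy0.le, hyl₀.le⟩ ⟨hc.1.le, hc.2.le⟩ (hfy.trans hfc.symm)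
  · intro l hl0 hl1 hfl
    exact ⟨hl0, hzlt l hl0 hl1 hfl, hl₀lt1⟩
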